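/- Let (L,·) be a loop, A(L) a subgroup of its automorphism group, and H(L) the A(L)-holomorph of (L,·). If H(L) is an Osborn loop, then for every x ∈ L and all α ∈ A(L) the triples (U, I, U) with U : y ↦ α(x)·(x\y), and (V, I, V) with V : y ↦ (α(x)·x^ρ)·y, are autotopisms of (L,·). -/

import Mathlib

/-- A loop: a set with multiplication, left and right division, and a
two-sided identity element, such that all translations are bijections
(expressed via the division operations). -/
structure Loop (L : Type*) where
  mul : L → L → L
  ldiv : L → L → L
  rdiv : L → L → L
  e : L
  mul_ldiv : ∀ x y, mul x (ldiv x y) = y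
  ldiv_mul : ∀ x y, ldiv x (mul x y) = y
  rdiv_mul : ∀ x y, mul (rdiv y x) x = y
  mul_rdiv : ∀ x y, rdiv (mul y x) x = y
  e_mul : ∀ x, mul e x = x
  mul_e : ∀ x, mul x e = x

namespace Loop

variable {L : Type*} (Q : Loop L)

/-- The left inverse `x^λ`, the unique element with `x^λ · x = e`. -/
def linv (x : L) : L := Q.rdiv Q.e x

/-- The right inverse `x^ρ`, the unique element with `x · x^ρ = e`. -/
def rinv (x : L) : L := Q.ldiv x Q.e

/-- A loop is Osborn if `x·((y·z)·x) = (x·((y·x^λ)·x))·(z·x)` for all `x,y,z`. -/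
def IsOsborn : Prop :=
  ∀ x y z, Q.mul x (Q.mul (Q.mul y z) x) =
    Q.mul (Q.mul x (Q.mul (Q.mul y (Q.linv x)) x)) (Q.mul z x)

/-- The automorphism group of a loop, as a subgroup of the permutation group. -/
def autGroup : Subgroup (Equiv.Perm L) where
  carrier := {α | ∀ x y, α (Q.mul x y) = Q.mul (α x) (α y)}
  one_mem' := fun _ _ => rfl
  mul_mem' := by
    intro α β ha hb x y
    simp only [Equiv.Perm.mul_apply]
    rw [hb x y, ha]
  inv_mem' := by
    intro α ha x y
    apply α.injective
    rw [ha]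
    simp

theorem mem_autGroup_iff {α : Equiv.Perm L} :
    α ∈ Q.autGroup ↔ ∀ x y, α (Q.mul x y) = Q.mul (α x) (α y) := Iff.rfl

theorem aut_fix_e {α : Equiv.Perm L} (hα : α ∈ Q.autGroup) : α Q.e = Q.e := by
  have h1 : α (Q.mul Q.e Q.e) = Q.mul (α Q.e) (α Q.e) := hα Q.e Q.e
  rw [Q.mul_e] at h1
  have h2 : Q.mul (α Q.e) (α Q.e) = Q.mul (α Q.e) Q.e := by rw [Q.mul_e, ← h1]
  have h3 := congrArg (Q.ldiv (α Q.e)) h2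
  rwa [Q.ldiv_mul, Q.ldiv_mul] at h3

/-- The `A`-holomorph of a loop `(L,·)`: the loop on `A × L` with multiplication
`(α,x)∘(β,y) = (α∘β, β(x)·y)`, where `A` is a subgroup of the automorphism group. -/
def Holomorph (A : Subgroup (Equiv.Perm L)) (hA : A ≤ Q.autGroup) : Loop (A × L) where
  mul p q := (p.1 * q.1, Q.mul ((q.1 : Equiv.Perm L) p.2) q.2)
  ldiv p r := (p.1⁻¹ * r.1, Q.ldiv (((p.1⁻¹ * r.1 : A) : Equiv.Perm L) p.2) r.2)
  rdiv r q := (r.1 * q.1⁻¹, ((q.1⁻¹ : A) : Equiv.Perm L) (Q.rdiv r.2 q.2))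
  e := (1, Q.e)
  mul_ldiv p r := by
    refine Prod.ext ?_ ?_
    · simp
    · simp [Q.mul_ldiv]
  ldiv_mul p q := by
    refine Prod.ext ?_ ?_
    · simp
    · simp [inv_mul_cancel_left, Q.ldiv_mul]
  rdiv_mul r q := by
    refine Prod.ext ?_ ?_
    · simp
    · simp [Q.rdiv_mul]
  mul_rdiv p q := by
    refine Prod.ext ?_ ?_
    · simp
    · simp [Q.mul_rdiv]
  e_mul p := by
    refine Prod.ext ?_ ?_
    · simp
    · simp [Q.aut_fix_e (hA p.1.2), Q.e_mul]
  mul_e p := by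
    refine Prod.ext ?_ ?_
    · simp
    · simp [Q.mul_e]

/-- A triple `(A,B,C)` of bijections of `L` is an autotopism of `(L,·)` if
`A(x)·B(y) = C(x·y)` for all `x, y`. -/
def IsAutotopism (A B C : L → L) : Prop :=
  Function.Bijective A ∧ Function.Bijective B ∧ Function.Bijective C ∧
    ∀ x y, Q.mul (A x) (B y) = C (Q.mul x y)

/-- A bijection `U` is ρ-regular if `(I,U,U)` is an autotopism. -/
def IsRhoRegular (U : L → L) : Prop := Q.IsAutotopism id U U

/-- A bijection `U` is λ-regular if `(U,I,U)` is an autotopism. -/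
def IsLambdaRegular (U : L → L) : Prop := Q.IsAutotopism U id U

/-- `U'` is an adjoint of the bijection `U` if `(U, U'⁻¹, I)` is an autotopism. -/
def IsMuAdjoint (U U' : L → L) : Prop :=
  letI : Nonempty L := ⟨Q.e⟩
  Function.Bijective U' ∧ Q.IsAutotopism U (Function.invFun U') id

/-- `U` is μ-regular if it has an adjoint, i.e. `(U, U'⁻¹, I)` is an
autotopism for some bijection `U'`. The μ-regular bijections form `Φ(L,·)`. -/
def IsMuRegular (U : L → L) : Prop := ∃ U', Q.IsMuAdjoint U U'

/-- `U'` belongs to `Ψ(L,·)`, the group of adjoints of μ-regular bijections. -/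
def IsPsi (U' : L → L) : Prop := ∃ U, Q.IsMuAdjoint U U'

/-- Membership in the left nucleus `N_λ`. -/
def InNlambda (a : L) : Prop := ∀ y z, Q.mul a (Q.mul y z) = Q.mul (Q.mul a y) z

/-- Membership in the middle nucleus `N_μ`. -/
def InNmu (a : L) : Prop := ∀ y z, Q.mul (Q.mul y a) z = Q.mul y (Q.mul a z)

/-- Membership in the right nucleus `N_ρ`. -/
def InNrho (a : L) : Prop := ∀ y z, Q.mul (Q.mul y z) a = Q.mul y (Q.mul z a)

/-- Membership in the nucleus `N = N_λ ∩ N_μ ∩ N_ρ`. -/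
def InNucleus (a : L) : Prop := Q.InNlambda a ∧ Q.InNmu a ∧ Q.InNrho a

/-- Membership in the center `Z = N ∩ C`. -/
def InCenter (a : L) : Prop := Q.InNucleus a ∧ ∀ x, Q.mul a x = Q.mul x a

end Loop

/-- If `H(L)` is an Osborn loop, then for every `x ∈ L` and all
`α ∈ A(L)` the triples `(U, I, U)` with `U : y ↦ α(x)·(x\y)` and `(V, I, V)` with
`V : y ↦ (α(x)·x^ρ)·y` are autotopisms of `(L,·)`. -/
theorem holomorph_osborn_lambda_autotopisms {L : Type*} (Q : Loop L)
    (A : Subgroup (Equiv.Perm L)) (hA : A ≤ Q.autGroup) :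
    (Q.Holomorph A hA).IsOsborn →
      ∀ (x : L) (α : A),
        Q.IsAutotopism (fun y => Q.mul ((α : Equiv.Perm L) x) (Q.ldiv x y)) id
          (fun y => Q.mul ((α : Equiv.Perm L) x) (Q.ldiv x y)) ∧
        Q.IsAutotopism (fun y => Q.mul (Q.mul ((α : Equiv.Perm L) x) (Q.rinv x)) y) id
          (fun y => Q.mul (Q.mul ((α : Equiv.Perm L) x) (Q.rinv x)) y) := by
  intro hO x α
  -- Key identity extracted from the Osborn law in the holomorph,
  -- applied to X = (β,x), Y = (β,b), Z = (β⁻¹,c).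
  have key : ∀ (β : A) (b c : L),
      Q.mul ((β : Equiv.Perm L) x) (Q.mul (Q.mul b ((β : Equiv.Perm L) c)) x) =
        Q.mul (Q.mul ((β : Equiv.Perm L) x) (Q.mul (Q.mul b (Q.linv x)) x))
          (Q.mul ((β : Equiv.Perm L) c) x) := by
    intro β b c
    have hm : ∀ u v, (β : Equiv.Perm L) (Q.mul u v) =
        Q.mul ((β : Equiv.Perm L) u) ((β : Equiv.Perm L) v) := hA β.2
    have h := congrArg Prod.snd (hO (β, x) (β, b) (β⁻¹, c))
    simp only [Loop.Holomorph, Loop.linv, one_mul, mul_inv_cancel, mul_inv_cancel_right,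
      inv_mul_cancel, OneMemClass.coe_one, Equiv.Perm.one_apply, hm, InvMemClass.coe_inv,
      Equiv.Perm.inv_def, Equiv.apply_symm_apply] at h
    exact h
  -- A reformulation of the key identity, with the `x^λ` term eliminated.
  have V : ∀ (β : A) (b c' : L),
      Q.mul ((β : Equiv.Perm L) x) (Q.mul (Q.mul b c') x) =
        Q.mul (Q.rdiv (Q.mul ((β : Equiv.Perm L) x) (Q.mul b x)) x) (Q.mul c' x) := by
    intro β b c'
    have hβe : (β : Equiv.Perm L) Q.e = Q.e := Q.aut_fix_e (hA β.2)
    have ke := key β b Q.e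
    rw [hβe, Q.mul_e, Q.e_mul] at ke
    -- ke : β(x)·(b·x) = (β(x)·((b·x^λ)·x))·x
    have hf : Q.mul ((β : Equiv.Perm L) x) (Q.mul (Q.mul b (Q.linv x)) x) =
        Q.rdiv (Q.mul ((β : Equiv.Perm L) x) (Q.mul b x)) x := by
      rw [ke, Q.mul_rdiv]
    have k := key β b ((β : Equiv.Perm L)⁻¹ c')
    rw [Equiv.Perm.inv_def, Equiv.apply_symm_apply, hf] at k
    exact k
  set U : L → L := fun y => Q.mul ((α : Equiv.Perm L) x) (Q.ldiv x y) with hU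
  have h1e : ((1 : A) : Equiv.Perm L) x = x := rfl
  have hV1 : ∀ b c', Q.mul x (Q.mul (Q.mul b c') x) =
      Q.mul (Q.rdiv (Q.mul x (Q.mul b x)) x) (Q.mul c' x) := by
    intro b c'
    have := V 1 b c'
    simpa using this
  have hlinv : Q.mul (Q.linv x) x = Q.e := Q.rdiv_mul x Q.e
  -- The main identity: U(u)·v = U(u·v).
  have hmain : ∀ u v, Q.mul (U u) v = U (Q.mul u v) := by
    intro u v
    set b : L := Q.rdiv (Q.ldiv x (Q.mul u x)) x with hbdef
    set c' : L := Q.rdiv v x with hcdef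
    have hb : Q.mul b x = Q.ldiv x (Q.mul u x) := Q.rdiv_mul _ _
    have hbx : Q.mul x (Q.mul b x) = Q.mul u x := by rw [hb, Q.mul_ldiv]
    have hg : Q.rdiv (Q.mul x (Q.mul b x)) x = u := by rw [hbx, Q.mul_rdiv]
    have hc : Q.mul c' x = v := Q.rdiv_mul x v
    -- Step 1: identify f := (α(x)·(b·x))/x with U u.
    have h2 : Q.mul x (Q.mul (Q.mul b (Q.linv x)) x) = u := by
      have := hV1 b (Q.linv x)
      rw [hlinv, Q.mul_e, hg] at this
      rw [this]
    have h3 : Q.mul (Q.mul b (Q.linv x)) x = Q.ldiv x u := by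
      rw [← h2, Q.ldiv_mul]
    have h1 := V α b (Q.linv x)
    rw [hlinv, Q.mul_e, h3] at h1
    -- h1 : α(x)·(x\u) = (α(x)·(b·x))/x
    -- Step 2: compute both sides.
    have h4 : Q.mul x (Q.mul (Q.mul b c') x) = Q.mul u v := by
      rw [hV1 b c', hg, hc]
    have h5 : Q.mul (Q.mul b c') x = Q.ldiv x (Q.mul u v) := by
      rw [← h4, Q.ldiv_mul]
    have h6 := V α b c'
    rw [h5, hc, ← h1] at h6
    exact h6.symm
  have hbij : Function.Bijective U := by
    rw [Function.bijective_iff_has_inverse]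
    refine ⟨fun y => Q.mul x (Q.ldiv ((α : Equiv.Perm L) x) y), fun y => ?_, fun y => ?_⟩
    · show Q.mul x (Q.ldiv _ (Q.mul _ (Q.ldiv x y))) = y
      rw [Q.ldiv_mul, Q.mul_ldiv]
    · show Q.mul _ (Q.ldiv x (Q.mul x (Q.ldiv _ y))) = y
      rw [Q.ldiv_mul, Q.mul_ldiv]
  have hfirst : Q.IsAutotopism U id U :=
    ⟨hbij, Function.bijective_id, hbij, fun u v => hmain u v⟩
  refine ⟨hfirst, ?_⟩
  have hVU : (fun y => Q.mul (Q.mul ((α : Equiv.Perm L) x) (Q.rinv x)) y) = U := by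
    funext y
    have := hmain Q.e y
    rw [Q.e_mul] at this
    exact this
  rw [hVU]
  exact hfirst
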